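/- Let Ω₁, …, Ωₙ be nonempty closed convex sets with empty intersection in a Hilbert space X, and let D(x) = max_i d(x, Ωᵢ). Then x̄ ∈ X minimizes D if and only if x̄ ∈ conv{Π(x̄; Ωᵢ) : i ∈ I(x̄)}, where I(x̄) = {i : D(x̄) = d(x̄, Ωᵢ)} and Π(x̄; Ωᵢ) denotes the (unique) metric projection of x̄ onto Ωᵢ. -/

import Mathlib

open Metric

private lemma le_infDist_aux {X : Type*} [NormedAddCommGroup X] {s : Set X}
    (hs : s.Nonempty) {x : X} {b : ℝ} (h : ∀ y ∈ s, b ≤ dist x y) :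
    b ≤ Metric.infDist x s := by
  by_contra hl
  obtain ⟨y, hy, hd⟩ := (Metric.infDist_lt_iff hs).1 (not_le.1 hl)
  exact absurd (h y hy) (not_le.2 hd)

private lemma proj_inner_le {X : Type*} [NormedAddCommGroup X] [InnerProductSpace ℝ X]
    {s : Set X} (hco : Convex ℝ s) {x v : X} (hv : v ∈ s)
    (hd : dist x v = Metric.infDist x s) :
    ∀ u ∈ s, inner ℝ (x - v) (u - v) ≤ (0 : ℝ) := by
  apply (norm_eq_iInf_iff_real_inner_le_zero hco hv).1
  rw [← dist_eq_norm, hd, Metric.infDist_eq_iInf]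
  simp only [dist_eq_norm]

private lemma inner_le_infDist_mul {X : Type*} [NormedAddCommGroup X] [InnerProductSpace ℝ X]
    {s : Set X} (hs : s.Nonempty) {xbar v : X} (hv : v ∈ s)
    (hproj : ∀ u ∈ s, inner ℝ (xbar - v) (u - v) ≤ (0 : ℝ)) (x : X) :
    inner ℝ (x - v) (xbar - v) ≤ Metric.infDist x s * ‖xbar - v‖ := by
  rcases (norm_nonneg (xbar - v)).eq_or_lt with hr | hr
  · have : xbar - v = 0 := by
      have := hr.symm
      simpa [norm_eq_zero] using this
    simp [this]
  · rw [← div_le_iff₀ hr]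
    apply le_infDist_aux hs
    intro u hu
    rw [div_le_iff₀ hr]
    have h1 : inner ℝ (x - v) (xbar - v) =
        inner ℝ (x - u) (xbar - v) + (inner ℝ (u - v) (xbar - v) : ℝ) := by
      rw [← inner_add_left]; congr 1; abel
    have h2 : (inner ℝ (u - v) (xbar - v) : ℝ) ≤ 0 := by
      rw [real_inner_comm]; exact hproj u hu
    have h3 : (inner ℝ (x - u) (xbar - v) : ℝ) ≤ ‖x - u‖ * ‖xbar - v‖ :=
      real_inner_le_norm _ _
    calc (inner ℝ (x - v) (xbar - v) : ℝ) ≤ inner ℝ (x - u) (xbar - v) := by linarith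
      _ ≤ ‖x - u‖ * ‖xbar - v‖ := h3
      _ = dist x u * ‖xbar - v‖ := by rw [dist_eq_norm]

/-- Characterization of solutions to the smallest intersecting ball problem in a
Hilbert space: `xbar` minimizes `D` iff it lies in the convex hull of its projections
onto the active sets.  Here `w i` denotes the (unique) projection of `xbar` onto `Ω i`. -/
theorem isMinOn_iff_mem_convexHull_proj
    {X : Type*} [NormedAddCommGroup X] [InnerProductSpace ℝ X] [CompleteSpace X]
    (n : ℕ) (hn : 1 < n) (Ω : Fin n → Set X)
    (hne : ∀ i, (Ω i).Nonempty) (hcl : ∀ i, IsClosed (Ω i))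
    (hco : ∀ i, Convex ℝ (Ω i)) (hint : (⋂ i, Ω i) = ∅)
    (D : X → ℝ)
    (hD : D = fun x => Finset.univ.sup' (Finset.univ_nonempty_iff.2 ⟨⟨0, by omega⟩⟩)
      fun i => Metric.infDist x (Ω i))
    (xbar : X) (w : Fin n → X)
    (hw : ∀ i, w i ∈ Ω i ∧ dist xbar (w i) = Metric.infDist xbar (Ω i)) :
    IsMinOn D Set.univ xbar ↔
      xbar ∈ convexHull ℝ (w '' {i | D xbar = Metric.infDist xbar (Ω i)}) := by
  have hN : (Finset.univ : Finset (Fin n)).Nonempty :=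
    Finset.univ_nonempty_iff.2 ⟨⟨0, by omega⟩⟩
  -- basic facts
  have hDle : ∀ x i, Metric.infDist x (Ω i) ≤ D x := by
    intro x i; rw [hD]
    exact Finset.le_sup' (fun i => Metric.infDist x (Ω i)) (Finset.mem_univ i)
  set r := D xbar with hr_def
  have hr : 0 < r := by
    have : xbar ∉ ⋂ i, Ω i := by rw [hint]; exact Set.notMem_empty _
    obtain ⟨i, hi⟩ := by simpa [Set.mem_iInter] using this
    have : 0 < Metric.infDist xbar (Ω i) :=
      ((hcl i).notMem_iff_infDist_pos (hne i)).1 hi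
    exact lt_of_lt_of_le this (hDle xbar i)
  set S : Set (Fin n) := {i | D xbar = Metric.infDist xbar (Ω i)} with hS_def
  have hproj : ∀ i, ∀ u ∈ Ω i, inner ℝ (xbar - w i) (u - w i) ≤ (0 : ℝ) :=
    fun i => proj_inner_le (hco i) (hw i).1 (hw i).2
  have hnormS : ∀ i ∈ S, ‖xbar - w i‖ = r := by
    intro i hi
    rw [← dist_eq_norm, (hw i).2, ← hi]
  have hfinS : (w '' S).Finite := (Set.toFinite S).image w
  constructor
  · -- minimizer → in convex hull
    intro hmin
    by_contra hnot
    have hCc : Convex ℝ (convexHull ℝ (w '' S)) := convex_convexHull _ _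
    have hCcl : IsClosed (convexHull ℝ (w '' S)) :=
      (hfinS.isCompact_convexHull ℝ).isClosed
    obtain ⟨f, u, hfx, hfb⟩ := geometric_hahn_banach_point_closed hCc hCcl hnot
    set h : X := (InnerProductSpace.toDual ℝ X).symm f with hh_def
    have hinner : ∀ z : X, inner ℝ h z = f z := fun z =>
      InnerProductSpace.toDual_symm_apply
    set δ : ℝ := u - f xbar with hδ_def
    have hδ : 0 < δ := sub_pos.2 hfx
    have hkey : ∀ i ∈ S, (inner ℝ h (xbar - w i) : ℝ) < -δ := by
      intro i hi
      have hwi : w i ∈ convexHull ℝ (w '' S) :=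
        subset_convexHull ℝ _ ⟨i, hi, rfl⟩
      have := hfb _ hwi
      rw [hinner, map_sub]
      simp only [hδ_def]
      linarith
    -- h ≠ 0
    obtain ⟨i₀, -, hi₀⟩ :=
      Finset.exists_mem_eq_sup' hN (fun i => Metric.infDist xbar (Ω i))
    have hi₀S : i₀ ∈ S := by
      rw [hS_def, Set.mem_setOf_eq, hD]
      exact hi₀
    have hh0 : h ≠ 0 := by
      intro h0
      have := hkey i₀ hi₀S
      rw [h0] at this
      simp at this
      linarith
    have hhn : 0 < ‖h‖ := norm_pos_iff.2 hh0
    -- choose t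
    set m : ℝ := Finset.univ.inf' hN
      (fun i => if i ∈ S then 1 else r - Metric.infDist xbar (Ω i)) with hm_def
    have hm : 0 < m := by
      rw [hm_def, Finset.lt_inf'_iff]
      intro i _
      by_cases hiS : i ∈ S
      · simp [hiS]
      · simp only [hiS, if_false]
        have h1 : Metric.infDist xbar (Ω i) ≤ r := hDle xbar i
        have h2 : Metric.infDist xbar (Ω i) ≠ r := fun he => hiS (by
          rw [hS_def, Set.mem_setOf_eq, ← hr_def, he])
        have := lt_of_le_of_ne h1 h2
        linarith
    set t : ℝ := min (δ / ‖h‖ ^ 2) (m / (2 * ‖h‖)) with ht_def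
    have ht : 0 < t := lt_min (by positivity) (by positivity)
    have ht1 : t * ‖h‖ ^ 2 ≤ δ := by
      have := min_le_left (δ / ‖h‖ ^ 2) (m / (2 * ‖h‖))
      rw [← ht_def] at this
      calc t * ‖h‖ ^ 2 ≤ (δ / ‖h‖ ^ 2) * ‖h‖ ^ 2 := by
            apply mul_le_mul_of_nonneg_right this (by positivity)
        _ = δ := by field_simp
    have ht2 : t * ‖h‖ < m := by
      have h2 := min_le_right (δ / ‖h‖ ^ 2) (m / (2 * ‖h‖))
      rw [← ht_def] at h2
      calc t * ‖h‖ ≤ (m / (2 * ‖h‖)) * ‖h‖ := by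
            apply mul_le_mul_of_nonneg_right h2 (by positivity)
        _ = m / 2 := by field_simp
        _ < m := by linarith
    -- D (xbar + t • h) < r
    have hlt : D (xbar + t • h) < r := by
      rw [hD]
      rw [Finset.sup'_lt_iff]
      intro i _
      by_cases hiS : i ∈ S
      · -- active: use norm expansion
        have hexp : ‖xbar + t • h - w i‖ ^ 2 < r ^ 2 := by
          have heq : xbar + t • h - w i = (xbar - w i) + t • h := by abel
          rw [heq, norm_add_sq_real]
          have hin : (inner ℝ (xbar - w i) (t • h) : ℝ) = t * inner ℝ h (xbar - w i) := by
            rw [real_inner_smul_right, real_inner_comm]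
          rw [hin, norm_smul, hnormS i hiS]
          have hk := hkey i hiS
          have : ‖t • h‖ = t * ‖h‖ := by
            rw [norm_smul, Real.norm_eq_abs, abs_of_pos ht]
          have hsq : (|t| * ‖h‖) ^ 2 = t ^ 2 * ‖h‖ ^ 2 := by
            rw [mul_pow, sq_abs]
          rw [Real.norm_eq_abs, hsq]
          have h5 : 2 * (t * (inner ℝ h (xbar - w i) : ℝ)) < -2 * (t * δ) := by
            have := mul_lt_mul_of_pos_left hk ht
            nlinarith
          have h6 : t ^ 2 * ‖h‖ ^ 2 ≤ t * δ := by
            have : t * (t * ‖h‖ ^ 2) ≤ t * δ :=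
              mul_le_mul_of_nonneg_left ht1 ht.le
            nlinarith
          nlinarith
        have hnlt : ‖xbar + t • h - w i‖ < r :=
          lt_of_pow_lt_pow_left₀ 2 hr.le hexp
        calc Metric.infDist (xbar + t • h) (Ω i) ≤ dist (xbar + t • h) (w i) :=
              Metric.infDist_le_dist_of_mem (hw i).1
          _ = ‖xbar + t • h - w i‖ := dist_eq_norm _ _
          _ < r := hnlt
      · -- inactive
        have h1 : Metric.infDist (xbar + t • h) (Ω i) ≤
            Metric.infDist xbar (Ω i) + dist (xbar + t • h) xbar :=
          Metric.infDist_le_infDist_add_dist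
        have h2 : dist (xbar + t • h) xbar = t * ‖h‖ := by
          rw [dist_eq_norm]
          simp [norm_smul, Real.norm_eq_abs, abs_of_pos ht]
        have h3 : m ≤ r - Metric.infDist xbar (Ω i) := by
          have := Finset.inf'_le (b := i)
            (fun i => if i ∈ S then 1 else r - Metric.infDist xbar (Ω i))
            (Finset.mem_univ i)
          rw [← hm_def] at this
          simpa [hiS] using this
        calc Metric.infDist (xbar + t • h) (Ω i)
            ≤ Metric.infDist xbar (Ω i) + t * ‖h‖ := by rw [← h2]; exact h1
          _ < Metric.infDist xbar (Ω i) + m := by linarith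
          _ ≤ r := by linarith
    exact absurd (hmin (Set.mem_univ (xbar + t • h))) (not_le.2 hlt)
  · -- in convex hull → minimizer
    intro hx
    rw [hfinS.convexHull_eq] at hx
    obtain ⟨lam, hlam0, hlam1, hcm⟩ := hx
    set T := hfinS.toFinset with hT_def
    have hxbar : xbar = ∑ y ∈ T, lam y • y := by
      rw [← hcm, Finset.centerMass_eq_of_sum_1 _ _ hlam1]
      rfl
    intro x _
    simp only [Set.mem_univ]
    -- key per-point bound
    have hkey : ∀ y ∈ T, (inner ℝ (x - y) (xbar - y) : ℝ) ≤ D x * r := by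
      intro y hy
      rw [hT_def, Set.Finite.mem_toFinset] at hy
      obtain ⟨i, hiS, rfl⟩ := hy
      have h1 := inner_le_infDist_mul (hne i) (hw i).1 (hproj i) x
      rw [hnormS i hiS] at h1
      calc (inner ℝ (x - w i) (xbar - w i) : ℝ) ≤ Metric.infDist x (Ω i) * r := h1
        _ ≤ D x * r := mul_le_mul_of_nonneg_right (hDle x i) hr.le
    -- sum identity
    have hsum : ∑ y ∈ T, lam y * (inner ℝ (x - y) (xbar - y) : ℝ) = r ^ 2 := by
      have hterm : ∀ y ∈ T, lam y * (inner ℝ (x - y) (xbar - y) : ℝ) =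
          lam y * (inner ℝ (x - xbar) (xbar - y) : ℝ) +
            lam y * ‖xbar - y‖ ^ 2 := by
        intro y hy
        have : (inner ℝ (x - y) (xbar - y) : ℝ) =
            inner ℝ (x - xbar) (xbar - y) + (inner ℝ (xbar - y) (xbar - y) : ℝ) := by
          rw [← inner_add_left]; congr 1; abel
        rw [this, real_inner_self_eq_norm_sq]
        ring
      rw [Finset.sum_congr rfl hterm, Finset.sum_add_distrib]
      have h1 : ∑ y ∈ T, lam y * (inner ℝ (x - xbar) (xbar - y) : ℝ) = 0 := by
        have : ∑ y ∈ T, lam y * (inner ℝ (x - xbar) (xbar - y) : ℝ) =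
            inner ℝ (x - xbar) (∑ y ∈ T, lam y • (xbar - y)) := by
          rw [inner_sum]
          congr 1; ext y
          rw [real_inner_smul_right]
        rw [this]
        have hz : ∑ y ∈ T, lam y • (xbar - y) = 0 := by
          have : ∑ y ∈ T, lam y • (xbar - y) =
              (∑ y ∈ T, lam y) • xbar - ∑ y ∈ T, lam y • y := by
            rw [Finset.sum_smul]
            rw [← Finset.sum_sub_distrib]
            congr 1; ext y
            rw [smul_sub]
          rw [this, hlam1, one_smul, ← hxbar, sub_self]
        rw [hz, inner_zero_right]
      have h2 : ∑ y ∈ T, lam y * ‖xbar - y‖ ^ 2 = r ^ 2 := by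
        have hterm2 : ∀ y ∈ T, lam y * ‖xbar - y‖ ^ 2 = lam y * r ^ 2 := by
          intro y hy
          rw [hT_def, Set.Finite.mem_toFinset] at hy
          obtain ⟨i, hiS, rfl⟩ := hy
          rw [hnormS i hiS]
        rw [Finset.sum_congr rfl hterm2, ← Finset.sum_mul, hlam1, one_mul]
      rw [h1, h2, zero_add]
    -- conclude
    have hlamT : ∀ y ∈ T, 0 ≤ lam y := by
      intro y hy
      rw [hT_def, Set.Finite.mem_toFinset] at hy
      exact hlam0 y hy
    have hle : r ^ 2 ≤ D x * r := by
      rw [← hsum]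
      calc ∑ y ∈ T, lam y * (inner ℝ (x - y) (xbar - y) : ℝ)
          ≤ ∑ y ∈ T, lam y * (D x * r) := by
            apply Finset.sum_le_sum
            intro y hy
            exact mul_le_mul_of_nonneg_left (hkey y hy) (hlamT y hy)
        _ = D x * r := by rw [← Finset.sum_mul, hlam1, one_mul]
    have : r ≤ D x := by
      have := hle
      nlinarith
    exact this
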